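/- Fix τ ∈ ℝ. Then the rescaled densities g_n(τ) := (1/√(n−2)) · h_n( π/2 + τ/√(n−2) ), defined for all integers n large enough that π/2 + τ/√(n−2) ∈ [0, π], converge as n → ∞ to the standard normal density (1/√(2π)) · e^{−τ²/2}. -/

import Mathlib

open Real Filter

/-- The angle density `h_p(θ) = (1/√π)·(Γ(p/2)/Γ((p−1)/2))·(sin θ)^{p−2}` on `[0, π]`. -/
noncomputable def hDensity (p : ℕ) (θ : ℝ) : ℝ :=
  (1 / Real.sqrt π) * (Real.Gamma ((p : ℝ) / 2) / Real.Gamma (((p : ℝ) - 1) / 2)) *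
    Real.sin θ ^ (p - 2)

lemma sin_div_lim : Tendsto (fun x : ℝ => Real.sin x / x) (nhdsWithin 0 {0}ᶜ) (nhds 1) := by
  have h := (Real.hasDerivAt_sin 0)
  rw [hasDerivAt_iff_tendsto_slope] at h
  simpa [slope_fun_def, Real.cos_zero, div_eq_inv_mul] using h

lemma cos_sub_one_lim : Tendsto (fun x : ℝ => (Real.cos x - 1) / x ^ 2) (nhdsWithin 0 {0}ᶜ)
    (nhds (-(1/2))) := by
  have hhalf : Tendsto (fun x : ℝ => x / 2) (nhdsWithin 0 {0}ᶜ) (nhdsWithin 0 {0}ᶜ) := by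
    apply tendsto_nhdsWithin_of_tendsto_nhds_of_eventually_within
    · exact ((continuous_id.div_const 2).tendsto' 0 0 (by simp)).mono_left nhdsWithin_le_nhds
    · filter_upwards [self_mem_nhdsWithin] with y hy
      simp only [Set.mem_compl_iff, Set.mem_singleton_iff] at hy ⊢
      intro h; exact hy (by linarith)
  have h1 : Tendsto (fun x : ℝ => -(1/2) * (Real.sin (x/2) / (x/2)) ^ 2) (nhdsWithin 0 {0}ᶜ)
      (nhds (-(1/2))) := by
    have := ((sin_div_lim.comp hhalf).pow 2).const_mul (-(1/2) : ℝ)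
    simpa using this
  refine h1.congr' ?_
  filter_upwards [self_mem_nhdsWithin] with x hx
  have hx0 : (x : ℝ) ≠ 0 := hx
  have hc : Real.cos x = 1 - 2 * Real.sin (x/2) ^ 2 := by
    have h2 : Real.cos (2*(x/2)) = 2*Real.cos (x/2)^2 - 1 := Real.cos_two_mul _
    have h3 := Real.sin_sq_add_cos_sq (x/2)
    have hx2 : 2*(x/2) = x := by ring
    rw [hx2] at h2; linarith
  rw [hc]
  field_simp
  ring

lemma log1p_lim : Tendsto (fun y : ℝ => Real.log (1 + y) / y) (nhdsWithin 0 {0}ᶜ) (nhds 1) := by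
  have h := Real.hasDerivAt_log one_ne_zero
  rw [hasDerivAt_iff_tendsto_slope] at h
  have hmap : Tendsto (fun y : ℝ => 1 + y) (nhdsWithin 0 {0}ᶜ) (nhdsWithin 1 {1}ᶜ) := by
    apply tendsto_nhdsWithin_of_tendsto_nhds_of_eventually_within
    · exact (continuous_const.add continuous_id).tendsto' 0 1 (by simp) |>.mono_left nhdsWithin_le_nhds
    · filter_upwards [self_mem_nhdsWithin] with y hy
      simpa using hy
  have := (h.comp hmap)
  simp only [slope_fun_def, Real.log_one, Function.comp_def, add_sub_cancel_left] at this
  simpa [div_eq_inv_mul] using this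



lemma cos_ne_one_ev : ∀ᶠ x : ℝ in nhdsWithin 0 {0}ᶜ, Real.cos x ≠ 1 := by
  have hIoo : ∀ᶠ x : ℝ in nhdsWithin 0 {0}ᶜ, x ∈ Set.Ioo (-π) π :=
    eventually_nhdsWithin_of_eventually_nhds
      (Ioo_mem_nhds (by linarith [Real.pi_pos]) Real.pi_pos)
  filter_upwards [hIoo, self_mem_nhdsWithin] with x hx hx0
  intro h
  have := Real.sin_eq_zero_iff_cos_eq.2 (Or.inl h)
  exact hx0 ((Real.sin_eq_zero_iff_of_lt_of_lt hx.1 hx.2).1 this)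

lemma logcos_lim : Tendsto (fun x : ℝ => Real.log (Real.cos x) / x ^ 2) (nhdsWithin 0 {0}ᶜ)
    (nhds (-(1/2))) := by
  have hmap : Tendsto (fun x : ℝ => Real.cos x - 1) (nhdsWithin 0 {0}ᶜ) (nhdsWithin 0 {0}ᶜ) := by
    apply tendsto_nhdsWithin_of_tendsto_nhds_of_eventually_within
    · exact ((Real.continuous_cos.sub continuous_const).tendsto' 0 0 (by simp)).mono_left
        nhdsWithin_le_nhds
    · filter_upwards [cos_ne_one_ev] with x hx
      simpa [sub_eq_zero] using hx
  have h1 : Tendsto (fun x : ℝ =>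
      (Real.log (1 + (Real.cos x - 1)) / (Real.cos x - 1)) * ((Real.cos x - 1) / x ^ 2))
      (nhdsWithin 0 {0}ᶜ) (nhds (-(1/2))) := by
    have := (log1p_lim.comp hmap).mul cos_sub_one_lim
    simpa [Function.comp_def] using this
  refine h1.congr' ?_
  filter_upwards [cos_ne_one_ev, self_mem_nhdsWithin] with x hc hx0
  have hne : Real.cos x - 1 ≠ 0 := sub_ne_zero.2 hc
  have hx0' : (x:ℝ) ≠ 0 := hx0
  field_simp
  congr 1; ring

noncomputable def rG (n : ℕ) : ℝ := Real.Gamma ((n : ℝ) / 2) / Real.Gamma (((n : ℝ) - 1) / 2)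

lemma two_le_cast {n : ℕ} (hn : 2 ≤ n) : (2:ℝ) ≤ (n:ℝ) := by exact_mod_cast hn

lemma rG_pos {n : ℕ} (hn : 2 ≤ n) : 0 < rG n := by
  have h := two_le_cast hn
  exact div_pos (Real.Gamma_pos_of_pos (by linarith)) (Real.Gamma_pos_of_pos (by linarith))

lemma rG_prod {n : ℕ} (hn : 2 ≤ n) : rG n * rG (n + 1) = ((n : ℝ) - 1) / 2 := by
  have h := two_le_cast hn
  have hG2 : (0:ℝ) < Real.Gamma ((n:ℝ)/2) := Real.Gamma_pos_of_pos (by linarith)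
  have hG1 : (0:ℝ) < Real.Gamma (((n:ℝ)-1)/2) := Real.Gamma_pos_of_pos (by linarith)
  have hadd : Real.Gamma (((n:ℝ)-1)/2 + 1) = (((n:ℝ)-1)/2) * Real.Gamma (((n:ℝ)-1)/2) :=
    Real.Gamma_add_one (by intro hc; rw [div_eq_zero_iff] at hc; rcases hc with hc|hc <;> linarith)
  have hcast : ((n + 1 : ℕ) : ℝ) = (n:ℝ) + 1 := by push_cast; ring
  have he1 : (((n+1:ℕ):ℝ)) / 2 = ((n:ℝ)-1)/2 + 1 := by rw [hcast]; ring
  have he2 : (((n+1:ℕ):ℝ) - 1) / 2 = (n:ℝ)/2 := by rw [hcast]; ring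
  unfold rG
  rw [he1, he2, hadd]
  field_simp

lemma rG_mono {n : ℕ} (hn : 2 ≤ n) : rG n ≤ rG (n + 1) := by
  have h := two_le_cast hn
  have ha : ((n:ℝ)-1)/2 ∈ Set.Ioi (0:ℝ) := by simp; linarith
  have hb : (((n+1:ℕ):ℝ)) / 2 ∈ Set.Ioi (0:ℝ) := by push_cast; simp; linarith
  have hconv := Real.convexOn_log_Gamma.2 ha hb (by norm_num : (0:ℝ) ≤ (1:ℝ)/2)
    (by norm_num : (0:ℝ) ≤ (1:ℝ)/2) (by norm_num)
  simp only [smul_eq_mul, Function.comp_apply] at hconv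
  have hmid : (1:ℝ)/2 * (((n:ℝ)-1)/2) + 1/2 * (((n+1:ℕ):ℝ)/2) = (n:ℝ)/2 := by push_cast; ring
  rw [hmid] at hconv
  -- hconv : log (Gamma (n/2)) ≤ 1/2 * log (Gamma ((n-1)/2)) + 1/2 * log (Gamma ((n+1)/2))
  have hG2 : (0:ℝ) < Real.Gamma ((n:ℝ)/2) := Real.Gamma_pos_of_pos (by linarith)
  have hG1 : (0:ℝ) < Real.Gamma (((n:ℝ)-1)/2) := Real.Gamma_pos_of_pos (by linarith)
  have hG3 : (0:ℝ) < Real.Gamma ((((n+1:ℕ):ℝ))/2) := Real.Gamma_pos_of_pos (by push_cast; linarith)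
  have hsq : Real.Gamma ((n:ℝ)/2) ^ 2 ≤ Real.Gamma (((n:ℝ)-1)/2) * Real.Gamma ((((n+1:ℕ):ℝ))/2) := by
    rw [← Real.log_le_log_iff (by positivity) (by positivity), Real.log_pow, Real.log_mul
      (ne_of_gt hG1) (ne_of_gt hG3)]
    push_cast at hconv ⊢
    linarith
  unfold rG
  rw [div_le_div_iff₀ hG1 (by rw [show (((n+1:ℕ):ℝ) - 1) / 2 = (n:ℝ)/2 by push_cast; ring]; exact hG2)]
  have he2 : (((n+1:ℕ):ℝ) - 1) / 2 = (n:ℝ)/2 := by push_cast; ring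
  rw [he2]
  nlinarith [hsq]


lemma hn2_atTop : Tendsto (fun n : ℕ => (n:ℝ) - 2) atTop atTop := by
  simpa [sub_eq_add_neg] using tendsto_atTop_add_const_right atTop (-2:ℝ) tendsto_natCast_atTop_atTop

lemma rG_sq_bounds {n : ℕ} (hn : 3 ≤ n) :
    ((n:ℝ) - 2) / 2 ≤ rG n ^ 2 ∧ rG n ^ 2 ≤ ((n:ℝ) - 1) / 2 := by
  obtain ⟨m, rfl⟩ : ∃ m, n = m + 1 := ⟨n - 1, by omega⟩
  have hm : 2 ≤ m := by omega
  have h1 := rG_prod hm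
  have h2 := rG_prod (by omega : 2 ≤ m + 1)
  have h3 := rG_mono hm
  have h4 := rG_mono (by omega : 2 ≤ m + 1)
  have p1 := rG_pos hm
  have p2 := rG_pos (by omega : 2 ≤ m + 1)
  constructor
  · have : ((m:ℝ) - 1) / 2 ≤ rG (m+1) ^ 2 := by nlinarith
    push_cast
    push_cast at this
    linarith
  · have : rG (m+1) ^ 2 ≤ (m:ℝ) / 2 := by
      push_cast at h2
      nlinarith
    push_cast
    linarith

lemma rG_div_sqrt_lim : Tendsto (fun n : ℕ => rG n / Real.sqrt ((n:ℝ) - 2)) atTop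
    (nhds (1 / Real.sqrt 2)) := by
  have hq : Tendsto (fun n : ℕ => rG n ^ 2 / ((n:ℝ) - 2)) atTop (nhds (1/2)) := by
    have hu : Tendsto (fun n : ℕ => 1/2 + (2 * ((n:ℝ) - 2))⁻¹) atTop (nhds (1/2)) := by
      have := (hn2_atTop.const_mul_atTop (by norm_num : (0:ℝ) < 2)).inv_tendsto_atTop
      simpa using tendsto_const_nhds.add this
    refine tendsto_of_tendsto_of_tendsto_of_le_of_le' tendsto_const_nhds hu ?_ ?_
    · filter_upwards [eventually_ge_atTop 3] with n hn
      have h3 : (3:ℝ) ≤ (n:ℝ) := by exact_mod_cast hn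
      have := (rG_sq_bounds hn).1
      rw [le_div_iff₀ (by linarith : (0:ℝ) < (n:ℝ) - 2)]
      linarith
    · filter_upwards [eventually_ge_atTop 3] with n hn
      have h3 : (3:ℝ) ≤ (n:ℝ) := by exact_mod_cast hn
      have := (rG_sq_bounds hn).2
      rw [div_le_iff₀ (by linarith : (0:ℝ) < (n:ℝ) - 2)]
      have hd2 : (2 * ((n:ℝ) - 2)) ≠ 0 := ne_of_gt (by linarith)
      have he : (1/2 + (2 * ((n:ℝ) - 2))⁻¹) * ((n:ℝ) - 2) = ((n:ℝ) - 1)/2 := by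
        have hd1 : (n:ℝ) - 2 ≠ 0 := ne_of_gt (by linarith)
        field_simp
        ring
      rw [he]; linarith
  have h := (Real.continuous_sqrt.tendsto _).comp hq
  have hval : Real.sqrt (1/2) = 1 / Real.sqrt 2 := by
    rw [one_div, one_div, Real.sqrt_inv]
  rw [hval] at h
  refine h.congr' ?_
  filter_upwards [eventually_ge_atTop 3] with n hn
  have h3 : (3:ℝ) ≤ (n:ℝ) := by exact_mod_cast hn
  have hp := rG_pos (by omega : 2 ≤ n)
  simp only [Function.comp_apply]
  rw [Real.sqrt_div (by positivity), Real.sqrt_sq hp.le]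


lemma sqrt_tendsto_atTop : Tendsto Real.sqrt atTop atTop := by
  refine tendsto_atTop_atTop.2 fun b => ⟨b ^ 2, fun a ha => ?_⟩
  calc b ≤ |b| := le_abs_self b
    _ = Real.sqrt (b ^ 2) := (Real.sqrt_sq_eq_abs b).symm
    _ ≤ Real.sqrt a := Real.sqrt_le_sqrt ha

lemma s_lim (τ : ℝ) : Tendsto (fun n : ℕ => τ / Real.sqrt ((n:ℝ) - 2)) atTop (nhds 0) := by
  have h := (sqrt_tendsto_atTop.comp hn2_atTop).inv_tendsto_atTop
  simpa [div_eq_mul_inv] using h.const_mul τ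

lemma partB (τ : ℝ) :
    Tendsto (fun n : ℕ => ((n:ℝ) - 2) * Real.log (Real.cos (τ / Real.sqrt ((n:ℝ) - 2))))
      atTop (nhds (-τ ^ 2 / 2)) := by
  rcases eq_or_ne τ 0 with rfl | hτ
  · simpa using (tendsto_const_nhds : Tendsto (fun _ : ℕ => (0:ℝ)) atTop (nhds 0))
  · have hs : Tendsto (fun n : ℕ => τ / Real.sqrt ((n:ℝ) - 2)) atTop (nhdsWithin 0 {0}ᶜ) := by
      refine tendsto_nhdsWithin_of_tendsto_nhds_of_eventually_within _ (s_lim τ) ?_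
      filter_upwards [eventually_ge_atTop 3] with n hn
      have h3 : (3:ℝ) ≤ (n:ℝ) := by exact_mod_cast hn
      have hpos : 0 < Real.sqrt ((n:ℝ) - 2) := Real.sqrt_pos.2 (by linarith)
      simp only [Set.mem_compl_iff, Set.mem_singleton_iff]
      exact div_ne_zero hτ (ne_of_gt hpos)
    have h := (logcos_lim.comp hs).const_mul (τ ^ 2)
    have hval : τ ^ 2 * -(1/2) = -τ ^ 2 / 2 := by ring
    rw [hval] at h
    refine h.congr' ?_
    filter_upwards [eventually_ge_atTop 3] with n hn
    have h3 : (3:ℝ) ≤ (n:ℝ) := by exact_mod_cast hn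
    have hpos : (0:ℝ) < (n:ℝ) - 2 := by linarith
    have hsq : (τ / Real.sqrt ((n:ℝ) - 2)) ^ 2 = τ ^ 2 / ((n:ℝ) - 2) := by
      rw [div_pow, Real.sq_sqrt hpos.le]
    simp only [Function.comp_apply]
    rw [hsq]
    have hτ2 : τ ^ 2 ≠ 0 := pow_ne_zero 2 hτ
    field_simp

theorem stmt_5 (τ : ℝ) :
    Tendsto
      (fun n : ℕ =>
        (1 / Real.sqrt ((n : ℝ) - 2)) * hDensity n (π / 2 + τ / Real.sqrt ((n : ℝ) - 2)))
      atTop (nhds ((1 / Real.sqrt (2 * π)) * Real.exp (-τ ^ 2 / 2))) := by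
  have hF : Tendsto (fun n : ℕ => (1 / Real.sqrt π) * (rG n / Real.sqrt ((n:ℝ) - 2))) atTop
      (nhds ((1 / Real.sqrt π) * (1 / Real.sqrt 2))) := rG_div_sqrt_lim.const_mul _
  have hC : Tendsto (fun n : ℕ =>
      Real.exp (((n:ℝ) - 2) * Real.log (Real.cos (τ / Real.sqrt ((n:ℝ) - 2))))) atTop
      (nhds (Real.exp (-τ ^ 2 / 2))) := (Real.continuous_exp.tendsto _).comp (partB τ)
  have hmul := hF.mul hC
  have hval : (1 / Real.sqrt π) * (1 / Real.sqrt 2) = 1 / Real.sqrt (2 * π) := by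
    rw [Real.sqrt_mul (by norm_num : (0:ℝ) ≤ 2)]
    ring
  rw [hval] at hmul
  refine hmul.congr' ?_
  have hcos : ∀ᶠ n : ℕ in atTop, 0 < Real.cos (τ / Real.sqrt ((n:ℝ) - 2)) := by
    have h := (Real.continuous_cos.tendsto 0).comp (s_lim τ)
    simp only [Real.cos_zero] at h
    exact h.eventually (eventually_gt_nhds (by norm_num : (0:ℝ) < 1))
  filter_upwards [eventually_ge_atTop 3, hcos] with n hn hc
  have h3 : (3:ℝ) ≤ (n:ℝ) := by exact_mod_cast hn
  set s := τ / Real.sqrt ((n:ℝ) - 2) with hs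
  have hsin : Real.sin (π / 2 + s) = Real.cos s := by
    rw [Real.sin_add]; simp
  have hcast : ((n - 2 : ℕ) : ℝ) = (n:ℝ) - 2 := by
    have : 2 ≤ n := by omega
    push_cast [Nat.cast_sub this]
    ring
  have hpow : Real.cos s ^ (n - 2) = Real.exp (((n:ℝ) - 2) * Real.log (Real.cos s)) := by
    rw [← Real.exp_log (pow_pos hc (n - 2)), Real.log_pow, hcast]
  simp only [hDensity, hsin, hpow]
  unfold rG
  ring
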